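/- Let η ∈ [0,1] and let φ : [0,1]³ → [0,1] be a Lebesgue-measurable function that is symmetric in its first two arguments, i.e., φ(u,v,λ) = φ(v,u,λ) for all u, v, λ. Suppose that (i) ∫∫∫ φ(u,v,λ) du dv dλ = η; (ii) ∫∫∫∫ φ(u,v,λ) φ(u′,v,λ) du du′ dv dλ = η²; and (iii) ∫∫∫∫∫ φ(u,v,λ) φ(u′,v,λ) φ(u,v′,λ) φ(u′,v′,λ) du du′ dv dv′ dλ = η⁴, where all integrals are with respect to Lebesgue measure on the unit interval in each variable. Then φ(u,v,λ) = η for Lebesgue-almost every (u,v,λ) ∈ [0,1]³. -/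

import Mathlib

open MeasureTheory Set ENNReal

private lemma bdd_integrable {α : Type*} [MeasurableSpace α] {μ : Measure α} [IsFiniteMeasure μ]
    {f : α → ℝ} {C : ℝ} (hm : AEStronglyMeasurable f μ) (hb : ∀ x, |f x| ≤ C) :
    Integrable f μ :=
  (integrable_const C).mono' hm (Filter.Eventually.of_forall fun x => by
    simpa [Real.norm_eq_abs] using hb x)

private lemma abs_mul_le_one {a b : ℝ} (ha : |a| ≤ 1) (hb : |b| ≤ 1) : |a * b| ≤ 1 := by
  rw [abs_mul]; nlinarith [abs_nonneg a, abs_nonneg b]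

private lemma abs_integral_le_one {α : Type*} [MeasurableSpace α] {μ : Measure α}
    [IsProbabilityMeasure μ] {f : α → ℝ} (hb : ∀ x, |f x| ≤ 1) : |∫ x, f x ∂μ| ≤ 1 := by
  have h := norm_integral_le_of_norm_le_const (μ := μ) (f := f) (C := 1)
    (Filter.Eventually.of_forall fun x => by rw [Real.norm_eq_abs]; exact hb x)
  rw [Real.norm_eq_abs, probReal_univ] at h
  simpa using h

private lemma ae_zero_of_integral_zero {α : Type*} [MeasurableSpace α] {μ : Measure α}
    [IsFiniteMeasure μ] {f : α → ℝ} {C : ℝ} (hm : AEStronglyMeasurable f μ)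
    (hnn : ∀ x, 0 ≤ f x) (hb : ∀ x, |f x| ≤ C) (h : ∫ x, f x ∂μ = 0) :
    ∀ᵐ x ∂μ, f x = 0 := by
  have := (integral_eq_zero_iff_of_nonneg hnn (bdd_integrable hm hb)).mp h
  filter_upwards [this] with x hx using hx

private lemma eq_const_of_moments {α : Type*} [MeasurableSpace α] {μ : Measure α}
    [IsProbabilityMeasure μ] {f : α → ℝ} {c : ℝ} (hm : AEStronglyMeasurable f μ)
    (h0 : ∀ x, 0 ≤ f x) (h1b : ∀ x, f x ≤ 1)
    (hc : ∫ x, f x ∂μ = c) (hc2 : ∫ x, f x * f x ∂μ = c * c) :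
    ∀ᵐ x ∂μ, f x = c := by
  have habs : ∀ x, |f x| ≤ 1 := fun x => abs_le.mpr ⟨by linarith [h0 x], h1b x⟩
  have hi : Integrable f μ := bdd_integrable hm habs
  have hi2 : Integrable (fun x => f x * f x) μ :=
    bdd_integrable (C := 1) (hm.mul hm) (fun x => by
      rw [abs_mul]
      nlinarith [abs_nonneg (f x), habs x])
  have key : ∫ x, (f x - c) ^ 2 ∂μ = 0 := by
    have heq : ∀ x, (f x - c) ^ 2 = f x * f x - (2 * c) * f x + c ^ 2 := by
      intro x; ring
    simp only [heq]
    have hsub : Integrable (fun x => f x * f x - 2 * c * f x) μ := hi2.sub (hi.const_mul _)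
    rw [integral_add hsub (integrable_const _),
      integral_sub hi2 (hi.const_mul _), integral_const_mul, hc, hc2, integral_const,
      probReal_univ]
    simp; ring
  have hsq : ∀ᵐ x ∂μ, (f x - c) ^ 2 = 0 := by
    refine ae_zero_of_integral_zero (C := (1 + |c|) ^ 2)
      (((hm.sub aestronglyMeasurable_const).mul (hm.sub aestronglyMeasurable_const)).congr
        (Filter.Eventually.of_forall fun x => by simp; ring)) (fun x => sq_nonneg _)
      (fun x => ?_) key
    have h1 : |f x - c| ≤ 1 + |c| := (abs_sub _ _).trans (by linarith [habs x])
    rw [abs_pow]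
    nlinarith [abs_nonneg (f x - c), abs_nonneg c]
  filter_upwards [hsq] with x hx
  have := pow_eq_zero_iff (n := 2) (by norm_num) |>.mp hx
  linarith [sub_eq_zero.mp this]

private lemma ae_zero_of_setIntegral_Iic_rat {μ : Measure ℝ} [IsFiniteMeasure μ]
    {f : ℝ → ℝ} (hm : AEStronglyMeasurable f μ) (hb : ∀ x, |f x| ≤ 1)
    (h : ∀ q : ℚ, ∫ x in Iic (q : ℝ), f x ∂μ = 0) :
    ∀ᵐ x ∂μ, f x = 0 := by
  have hi : Integrable f μ := bdd_integrable hm hb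
  have ham : AEMeasurable f μ := hm.aemeasurable
  set p : ℝ → ENNReal := fun x => ENNReal.ofReal (f x) with hp
  set n : ℝ → ENNReal := fun x => ENNReal.ofReal (-f x) with hn
  have hpm : AEMeasurable p μ := ENNReal.measurable_ofReal.comp_aemeasurable ham
  have hnm : AEMeasurable n μ := ENNReal.measurable_ofReal.comp_aemeasurable ham.neg
  have hptop : ∫⁻ x, p x ∂μ ≠ ⊤ := by
    refine ne_top_of_le_ne_top (b := μ univ) (measure_ne_top μ univ) ?_
    calc ∫⁻ x, p x ∂μ ≤ ∫⁻ _, 1 ∂μ := lintegral_mono fun x =>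
          ENNReal.ofReal_le_one.mpr (le_trans (le_abs_self _) (hb x))
      _ = μ univ := lintegral_one
  have hntop : ∫⁻ x, n x ∂μ ≠ ⊤ := by
    refine ne_top_of_le_ne_top (b := μ univ) (measure_ne_top μ univ) ?_
    calc ∫⁻ x, n x ∂μ ≤ ∫⁻ _, 1 ∂μ := lintegral_mono fun x =>
          ENNReal.ofReal_le_one.mpr (le_trans (neg_le_abs _) (hb x))
      _ = μ univ := lintegral_one
  set ρ₁ : Measure ℝ := μ.withDensity p with hρ₁
  set ρ₂ : Measure ℝ := μ.withDensity n with hρ₂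
  haveI : IsFiniteMeasure ρ₁ := isFiniteMeasure_withDensity_ofReal hi.hasFiniteIntegral
  haveI : IsFiniteMeasure ρ₂ := isFiniteMeasure_withDensity_ofReal hi.neg.hasFiniteIntegral
  have hQ : ∀ q : ℚ, ρ₁ (Iic (q : ℝ)) = ρ₂ (Iic (q : ℝ)) := by
    intro q
    have hres : Integrable f (μ.restrict (Iic (q : ℝ))) := hi.restrict
    have hlin := integral_eq_lintegral_pos_part_sub_lintegral_neg_part hres
    rw [h q] at hlin
    have h₁ : ∫⁻ x, ENNReal.ofReal (f x) ∂(μ.restrict (Iic (q : ℝ))) ≠ ⊤ :=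
      ne_top_of_le_ne_top hptop (lintegral_mono' Measure.restrict_le_self le_rfl)
    have h₂ : ∫⁻ x, ENNReal.ofReal (-f x) ∂(μ.restrict (Iic (q : ℝ))) ≠ ⊤ :=
      ne_top_of_le_ne_top hntop (lintegral_mono' Measure.restrict_le_self le_rfl)
    have heq : (∫⁻ x, ENNReal.ofReal (f x) ∂(μ.restrict (Iic (q : ℝ)))).toReal =
        (∫⁻ x, ENNReal.ofReal (-f x) ∂(μ.restrict (Iic (q : ℝ)))).toReal := by linarith
    have := (ENNReal.toReal_eq_toReal_iff' h₁ h₂).mp heq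
    rw [hρ₁, hρ₂, withDensity_apply _ measurableSet_Iic, withDensity_apply _ measurableSet_Iic]
    exact this
  have hR : ∀ r : ℝ, ρ₁ (Iic r) = ρ₂ (Iic r) := by
    intro r
    haveI hne : Nonempty {q : ℚ // r < (q : ℝ)} := by
      obtain ⟨q, hq⟩ := exists_rat_gt r
      exact ⟨⟨q, hq⟩⟩
    have hinter : Iic r = ⋂ q : {q : ℚ // r < (q : ℝ)}, Iic ((q : ℚ) : ℝ) := by
      ext x
      simp only [mem_Iic, mem_iInter]
      constructor
      · intro hx q; exact hx.trans q.2.le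
      · intro hx
        by_contra hc
        push_neg at hc
        obtain ⟨q, hq1, hq2⟩ := exists_rat_btwn hc
        exact absurd (hx ⟨q, hq1⟩) (not_le.mpr hq2)
    have hdir : Directed (· ⊇ ·) fun q : {q : ℚ // r < (q : ℝ)} => Iic ((q : ℚ) : ℝ) := by
      intro q₁ q₂
      refine ⟨⟨min q₁.1 q₂.1, ?_⟩, ?_, ?_⟩
      · push_cast
        exact lt_min q₁.2 q₂.2
      · exact Iic_subset_Iic.mpr (by push_cast; exact min_le_left _ _)
      · exact Iic_subset_Iic.mpr (by push_cast; exact min_le_right _ _)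
    have h₁ := Directed.measure_iInter (μ := ρ₁)
      (fun q : {q : ℚ // r < (q : ℝ)} => (measurableSet_Iic).nullMeasurableSet) hdir
      ⟨hne.some, measure_ne_top _ _⟩
    have h₂ := Directed.measure_iInter (μ := ρ₂)
      (fun q : {q : ℚ // r < (q : ℝ)} => (measurableSet_Iic).nullMeasurableSet) hdir
      ⟨hne.some, measure_ne_top _ _⟩
    rw [hinter, h₁, h₂]
    exact iInf_congr fun q => hQ q.1
  have hmeq : ρ₁ = ρ₂ := Measure.ext_of_Iic ρ₁ ρ₂ hR
  have hae : p =ᵐ[μ] n := (withDensity_eq_iff hpm hnm hptop).mp hmeq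
  filter_upwards [hae] with x hx
  simp only [hp, hn] at hx
  rcases le_or_gt (f x) 0 with hf0 | hf0
  · have h0 : ENNReal.ofReal (f x) = 0 := ENNReal.ofReal_eq_zero.mpr hf0
    rw [h0] at hx
    have : -f x ≤ 0 := ENNReal.ofReal_eq_zero.mp hx.symm
    linarith
  · have h0 : ENNReal.ofReal (-f x) = 0 := ENNReal.ofReal_eq_zero.mpr (by linarith)
    rw [h0] at hx
    have : f x ≤ 0 := ENNReal.ofReal_eq_zero.mp hx
    linarith

private lemma meas_comp3 {γ : Type*} [MeasurableSpace γ] {φ : ℝ → ℝ → ℝ → ℝ}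
    (hmeas : Measurable fun p : ℝ × ℝ × ℝ => φ p.1 p.2.1 p.2.2)
    {a b c : γ → ℝ} (ha : Measurable a) (hb : Measurable b) (hc : Measurable c) :
    Measurable fun x => φ (a x) (b x) (c x) :=
  hmeas.comp (ha.prodMk (hb.prodMk hc))

theorem stmt17 (η : ℝ) (hη : η ∈ Set.Icc (0 : ℝ) 1)
    (φ : ℝ → ℝ → ℝ → ℝ)
    (hmeas : Measurable fun p : ℝ × ℝ × ℝ => φ p.1 p.2.1 p.2.2)
    (hrange : ∀ u v l : ℝ, φ u v l ∈ Set.Icc (0 : ℝ) 1)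
    (hsymm : ∀ u v l : ℝ, φ u v l = φ v u l)
    (h1 : (∫ l in Set.Icc (0:ℝ) 1, ∫ v in Set.Icc (0:ℝ) 1, ∫ u in Set.Icc (0:ℝ) 1,
            φ u v l) = η)
    (h2 : (∫ l in Set.Icc (0:ℝ) 1, ∫ v in Set.Icc (0:ℝ) 1, ∫ u in Set.Icc (0:ℝ) 1,
            ∫ u' in Set.Icc (0:ℝ) 1, φ u v l * φ u' v l) = η ^ 2)
    (h3 : (∫ l in Set.Icc (0:ℝ) 1, ∫ v in Set.Icc (0:ℝ) 1, ∫ v' in Set.Icc (0:ℝ) 1,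
            ∫ u in Set.Icc (0:ℝ) 1, ∫ u' in Set.Icc (0:ℝ) 1,
            φ u v l * φ u' v l * φ u v' l * φ u' v' l) = η ^ 4) :
    ∀ᵐ p ∂((volume : Measure (ℝ × ℝ × ℝ)).restrict
        (Set.Icc (0:ℝ) 1 ×ˢ Set.Icc (0:ℝ) 1 ×ˢ Set.Icc (0:ℝ) 1)),
      φ p.1 p.2.1 p.2.2 = η := by
  classical
  set μ : Measure ℝ := volume.restrict (Set.Icc (0:ℝ) 1) with hμ
  haveI hprob : IsProbabilityMeasure μ := by
    constructor
    rw [hμ, Measure.restrict_apply_univ, Real.volume_Icc]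
    norm_num
  -- basic bounds
  have habs : ∀ u v l : ℝ, |φ u v l| ≤ 1 := fun u v l =>
    abs_le.mpr ⟨by linarith [(hrange u v l).1], (hrange u v l).2⟩
  have hψabs : ∀ u v l : ℝ, |φ u v l - η| ≤ 1 := fun u v l =>
    abs_le.mpr ⟨by linarith [(hrange u v l).1, hη.2], by linarith [(hrange u v l).2, hη.1]⟩
  -- measurability of the two parametrized integrals
  have hGsm : StronglyMeasurable (fun x : ℝ × ℝ => ∫ u, φ u x.2 x.1 ∂μ) := by
    have hm : Measurable fun z : (ℝ × ℝ) × ℝ => φ z.2 z.1.2 z.1.1 :=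
      meas_comp3 hmeas measurable_snd measurable_fst.snd measurable_fst.fst
    exact hm.stronglyMeasurable.integral_prod_right'
  have hQsm : StronglyMeasurable (fun z : ℝ × ℝ × ℝ => ∫ u, φ u z.2.1 z.1 * φ u z.2.2 z.1 ∂μ) := by
    have hm : Measurable fun w : (ℝ × ℝ × ℝ) × ℝ =>
        φ w.2 w.1.2.1 w.1.1 * φ w.2 w.1.2.2 w.1.1 :=
      (meas_comp3 hmeas measurable_snd measurable_fst.snd.fst measurable_fst.fst).mul
        (meas_comp3 hmeas measurable_snd measurable_fst.snd.snd measurable_fst.fst)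
    exact hm.stronglyMeasurable.integral_prod_right'
  have hGabs : ∀ x : ℝ × ℝ, |∫ u, φ u x.2 x.1 ∂μ| ≤ 1 := fun x =>
    abs_integral_le_one (fun u => habs u x.2 x.1)
  have hGnn : ∀ x : ℝ × ℝ, 0 ≤ ∫ u, φ u x.2 x.1 ∂μ := fun x =>
    integral_nonneg (fun u => (hrange u x.2 x.1).1)
  have hQabs : ∀ z : ℝ × ℝ × ℝ, |∫ u, φ u z.2.1 z.1 * φ u z.2.2 z.1 ∂μ| ≤ 1 := fun z =>
    abs_integral_le_one (fun u => abs_mul_le_one (habs u z.2.1 z.1) (habs u z.2.2 z.1))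
  have hQnn : ∀ z : ℝ × ℝ × ℝ, 0 ≤ ∫ u, φ u z.2.1 z.1 * φ u z.2.2 z.1 ∂μ := fun z =>
    integral_nonneg (fun u => mul_nonneg (hrange u z.2.1 z.1).1 (hrange u z.2.2 z.1).1)
  -- integrable sections of φ
  have hsecm : ∀ v l : ℝ, Measurable (fun u => φ u v l) := fun v l =>
    meas_comp3 hmeas measurable_id measurable_const measurable_const
  have hseci : ∀ v l : ℝ, Integrable (fun u => φ u v l) μ := fun v l =>
    bdd_integrable (C := 1) (hsecm v l).aestronglyMeasurable (fun u => habs u v l)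
  have hsec2m : ∀ v v' l : ℝ, Measurable (fun u => φ u v l * φ u v' l) := fun v v' l =>
    (hsecm v l).mul (hsecm v' l)
  have hsec2i : ∀ v v' l : ℝ, Integrable (fun u => φ u v l * φ u v' l) μ := fun v v' l =>
    bdd_integrable (C := 1) (hsec2m v v' l).aestronglyMeasurable
      (fun u => abs_mul_le_one (habs u v l) (habs u v' l))
  -- STEP A : the degree function is a.e. constant η
  have hGint : Integrable (fun x : ℝ × ℝ => ∫ u, φ u x.2 x.1 ∂μ) (μ.prod μ) :=
    bdd_integrable (C := 1) hGsm.aestronglyMeasurable hGabs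
  have h1' : ∫ x : ℝ × ℝ, (∫ u, φ u x.2 x.1 ∂μ) ∂(μ.prod μ) = η := by
    rw [integral_prod _ hGint]
    exact h1
  have h2' : ∫ x : ℝ × ℝ, (∫ u, φ u x.2 x.1 ∂μ) * (∫ u, φ u x.2 x.1 ∂μ) ∂(μ.prod μ)
      = η * η := by
    have hint : Integrable (fun x : ℝ × ℝ =>
        (∫ u, φ u x.2 x.1 ∂μ) * (∫ u, φ u x.2 x.1 ∂μ)) (μ.prod μ) :=
      bdd_integrable (C := 1) (hGsm.mul hGsm).aestronglyMeasurable
        (fun x => abs_mul_le_one (hGabs x) (hGabs x))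
    rw [integral_prod _ hint]
    simp only [integral_const_mul, integral_mul_const] at h2
    rw [← pow_two η, ← h2]
  have hGfirst : ∀ᵐ x ∂(μ.prod μ), (∫ u, φ u x.2 x.1 ∂μ) = η :=
    eq_const_of_moments hGsm.aestronglyMeasurable hGnn
      (fun x => (abs_le.mp (hGabs x)).2) h1' h2'
  have hA : ∀ᵐ l ∂μ, ∀ᵐ v ∂μ, (∫ u, φ u v l ∂μ) = η :=
    Measure.ae_ae_of_ae_prod hGfirst
  -- STEP B : the codegree function is a.e. constant η²
  have hQint : Integrable (fun z : ℝ × ℝ × ℝ => ∫ u, φ u z.2.1 z.1 * φ u z.2.2 z.1 ∂μ)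
      (μ.prod (μ.prod μ)) :=
    bdd_integrable (C := 1) hQsm.aestronglyMeasurable hQabs
  have hQsecint : ∀ l : ℝ, Integrable
      (fun y : ℝ × ℝ => ∫ u, φ u y.1 l * φ u y.2 l ∂μ) (μ.prod μ) := by
    intro l
    have hm : Measurable fun w : (ℝ × ℝ) × ℝ => φ w.2 w.1.1 l * φ w.2 w.1.2 l :=
      (meas_comp3 hmeas measurable_snd measurable_fst.fst measurable_const).mul
        (meas_comp3 hmeas measurable_snd measurable_fst.snd measurable_const)
    exact bdd_integrable (C := 1) hm.stronglyMeasurable.integral_prod_right'.aestronglyMeasurable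
      (fun y => abs_integral_le_one (fun u => abs_mul_le_one (habs u y.1 l) (habs u y.2 l)))
  have h3' : ∫ z : ℝ × ℝ × ℝ, (∫ u, φ u z.2.1 z.1 * φ u z.2.2 z.1 ∂μ) *
      (∫ u, φ u z.2.1 z.1 * φ u z.2.2 z.1 ∂μ) ∂(μ.prod (μ.prod μ)) = (η * η) * (η * η) := by
    have hint : Integrable (fun z : ℝ × ℝ × ℝ =>
        (∫ u, φ u z.2.1 z.1 * φ u z.2.2 z.1 ∂μ) * (∫ u, φ u z.2.1 z.1 * φ u z.2.2 z.1 ∂μ))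
        (μ.prod (μ.prod μ)) :=
      bdd_integrable (C := 1) (hQsm.mul hQsm).aestronglyMeasurable
        (fun z => abs_mul_le_one (hQabs z) (hQabs z))
    rw [integral_prod _ hint]
    have hx : ∀ l : ℝ, ∫ y : ℝ × ℝ, (∫ u, φ u y.1 l * φ u y.2 l ∂μ) *
        (∫ u, φ u y.1 l * φ u y.2 l ∂μ) ∂(μ.prod μ)
        = ∫ v, ∫ v', (∫ u, φ u v l * φ u v' l ∂μ) * (∫ u, φ u v l * φ u v' l ∂μ) ∂μ ∂μ := by
      intro l
      have hint2 : Integrable (fun y : ℝ × ℝ => (∫ u, φ u y.1 l * φ u y.2 l ∂μ) *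
          (∫ u, φ u y.1 l * φ u y.2 l ∂μ)) (μ.prod μ) := by
        have hm : Measurable fun w : (ℝ × ℝ) × ℝ => φ w.2 w.1.1 l * φ w.2 w.1.2 l :=
          (meas_comp3 hmeas measurable_snd measurable_fst.fst measurable_const).mul
            (meas_comp3 hmeas measurable_snd measurable_fst.snd measurable_const)
        exact bdd_integrable (C := 1)
          (hm.stronglyMeasurable.integral_prod_right'.mul
            hm.stronglyMeasurable.integral_prod_right').aestronglyMeasurable
          (fun y => abs_mul_le_one
            (abs_integral_le_one (fun u => abs_mul_le_one (habs u y.1 l) (habs u y.2 l)))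
            (abs_integral_le_one (fun u => abs_mul_le_one (habs u y.1 l) (habs u y.2 l))))
      exact integral_prod _ hint2
    simp only [hx]
    -- rewrite h3
    have hre : ∀ l v v' : ℝ, (∫ u, ∫ u', φ u v l * φ u' v l * φ u v' l * φ u' v' l ∂μ ∂μ)
        = (∫ u, φ u v l * φ u v' l ∂μ) * (∫ u', φ u' v l * φ u' v' l ∂μ) := by
      intro l v v'
      have hstep : ∀ u, (∫ u', φ u v l * φ u' v l * φ u v' l * φ u' v' l ∂μ)
          = (φ u v l * φ u v' l) * ∫ u', φ u' v l * φ u' v' l ∂μ := by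
        intro u
        rw [← integral_const_mul]
        congr 1; funext u'; ring
      simp only [hstep]
      rw [integral_mul_const]
    simp only [hre] at h3
    rw [h3]
    ring
  have hQ1 : ∫ z : ℝ × ℝ × ℝ, (∫ u, φ u z.2.1 z.1 * φ u z.2.2 z.1 ∂μ) ∂(μ.prod (μ.prod μ))
      = η * η := by
    rw [integral_prod _ hQint]
    have hx : ∀ l : ℝ, ∫ y : ℝ × ℝ, (∫ u, φ u y.1 l * φ u y.2 l ∂μ) ∂(μ.prod μ)
        = ∫ v, ∫ v', (∫ u, φ u v l * φ u v' l ∂μ) ∂μ ∂μ := fun l =>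
      integral_prod _ (hQsecint l)
    simp only [hx]
    have key : ∀ᵐ l ∂μ, (∫ v, ∫ v', (∫ u, φ u v l * φ u v' l ∂μ) ∂μ ∂μ) = η * η := by
      filter_upwards [hA] with l hAl
      have stepi : ∀ v, (∫ v', (∫ u, φ u v l * φ u v' l ∂μ) ∂μ)
          = ∫ u, φ u v l * (∫ w, φ w u l ∂μ) ∂μ := by
        intro v
        have hsw : Integrable (Function.uncurry fun v' u => φ u v l * φ u v' l) (μ.prod μ) := by
          have hm : Measurable fun z : ℝ × ℝ => φ z.2 v l * φ z.2 z.1 l :=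
            (meas_comp3 hmeas measurable_snd measurable_const measurable_const).mul
              (meas_comp3 hmeas measurable_snd measurable_fst measurable_const)
          exact bdd_integrable (C := 1) hm.aestronglyMeasurable
            (fun z => abs_mul_le_one (habs z.2 v l) (habs z.2 z.1 l))
        rw [integral_integral_swap hsw]
        congr 1; funext u
        rw [integral_const_mul]
        congr 1
        congr 1; funext v'
        exact hsymm u v' l
      simp only [stepi]
      have stepii : ∀ v, (∫ u, φ u v l * (∫ w, φ w u l ∂μ) ∂μ)
          = η * (∫ u, φ u v l ∂μ) := by
        intro v
        have : ∫ u, φ u v l * (∫ w, φ w u l ∂μ) ∂μ = ∫ u, φ u v l * η ∂μ := by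
          apply integral_congr_ae
          filter_upwards [hAl] with u hu
          rw [hu]
        rw [this, integral_mul_const]
        ring
      simp only [stepii]
      rw [integral_const_mul]
      have : ∫ v, (∫ u, φ u v l ∂μ) ∂μ = ∫ v, η ∂μ := integral_congr_ae hAl
      rw [this, integral_const, probReal_univ]
      simp
    rw [integral_congr_ae key, integral_const, probReal_univ]
    simp
  have hQfirst : ∀ᵐ z ∂(μ.prod (μ.prod μ)),
      (∫ u, φ u z.2.1 z.1 * φ u z.2.2 z.1 ∂μ) = η * η :=
    eq_const_of_moments hQsm.aestronglyMeasurable hQnn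
      (fun z => (abs_le.mp (hQabs z)).2) hQ1 h3'
  have hQae : ∀ᵐ l ∂μ, ∀ᵐ y ∂(μ.prod μ), (∫ u, φ u y.1 l * φ u y.2 l ∂μ) = η * η :=
    Measure.ae_ae_of_ae_prod hQfirst
  -- STEP C : conclude φ = η slice by slice
  have hC : ∀ᵐ l ∂μ, ∀ᵐ u ∂μ, ∀ᵐ v ∂μ, φ u v l = η := by
    filter_upwards [hA, hQae] with l hAl hQl
    have hQl2 : ∀ᵐ v ∂μ, ∀ᵐ v' ∂μ, (∫ u, φ u v l * φ u v' l ∂μ) = η * η :=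
      Measure.ae_ae_of_ae_prod hQl
    -- K vanishes a.e.
    have hK : ∀ᵐ v ∂μ, ∀ᵐ v' ∂μ, (∫ u, (φ u v l - η) * (φ u v' l - η) ∂μ) = 0 := by
      filter_upwards [hAl, hQl2] with v hGv hQv
      filter_upwards [hAl, hQv] with v' hGv' hQvv'
      have heq : ∀ u, (φ u v l - η) * (φ u v' l - η)
          = (φ u v l * φ u v' l - η * φ u v' l) - (η * φ u v l - η * η) := by
        intro u; ring
      simp only [heq]
      have i3 : Integrable (fun u => η * φ u v' l) μ := (hseci v' l).const_mul η
      have i4 : Integrable (fun u => η * φ u v l) μ := (hseci v l).const_mul η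
      have i1 : Integrable (fun u => φ u v l * φ u v' l - η * φ u v' l) μ :=
        (hsec2i v v' l).sub i3
      have i2 : Integrable (fun u => η * φ u v l - η * η) μ := i4.sub (integrable_const _)
      rw [integral_sub i1 i2, integral_sub (hsec2i v v' l) i3,
        integral_sub i4 (integrable_const _),
        integral_const_mul, integral_const_mul, integral_const, probReal_univ,
        hQvv', hGv, hGv']
      simp
    -- for each rational q the indicator-test integral vanishes a.e.
    have hT : ∀ q : ℚ, ∀ᵐ u ∂μ,
        (∫ v, (Iic (q:ℝ)).indicator (fun _ => (1:ℝ)) v * (φ u v l - η) ∂μ) = 0 := by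
      intro q
      set c : ℝ → ℝ := (Iic (q:ℝ)).indicator (fun _ => (1:ℝ)) with hc
      have hcm : Measurable c := measurable_const.indicator measurableSet_Iic
      have hcabs : ∀ v, |c v| ≤ 1 := by
        intro v
        rw [hc]
        by_cases hmem : v ∈ Iic (q:ℝ) <;> simp [hmem]
      have hψm : Measurable fun z : ℝ × ℝ => c z.2 * (φ z.1 z.2 l - η) :=
        (hcm.comp measurable_snd).mul
          ((meas_comp3 hmeas measurable_fst measurable_snd measurable_const).sub
            measurable_const)
      have hTm : StronglyMeasurable fun u => ∫ v, c v * (φ u v l - η) ∂μ :=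
        hψm.stronglyMeasurable.integral_prod_right'
      have hTabs : ∀ u, |∫ v, c v * (φ u v l - η) ∂μ| ≤ 1 := fun u =>
        abs_integral_le_one (fun v => abs_mul_le_one (hcabs v) (hψabs u v l))
      -- expand the square
      have e1 : ∀ u, (∫ v, c v * (φ u v l - η) ∂μ) * (∫ v, c v * (φ u v l - η) ∂μ)
          = ∫ v, ∫ v', (c v * (φ u v l - η)) * (c v' * (φ u v' l - η)) ∂μ ∂μ := by
        intro u
        rw [← integral_mul_const]
        congr 1; funext v
        rw [← integral_const_mul]
      have hzero : ∫ u, (∫ v, c v * (φ u v l - η) ∂μ) * (∫ v, c v * (φ u v l - η) ∂μ) ∂μ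
          = 0 := by
        simp only [e1]
        have hsw1 : Integrable (Function.uncurry fun u v =>
            ∫ v', (c v * (φ u v l - η)) * (c v' * (φ u v' l - η)) ∂μ) (μ.prod μ) := by
          have hm : Measurable fun w : (ℝ × ℝ) × ℝ =>
              (c w.1.2 * (φ w.1.1 w.1.2 l - η)) * (c w.2 * (φ w.1.1 w.2 l - η)) :=
            (((hcm.comp measurable_fst.snd).mul
              ((meas_comp3 hmeas measurable_fst.fst measurable_fst.snd measurable_const).sub
                measurable_const)).mul
              ((hcm.comp measurable_snd).mul
                ((meas_comp3 hmeas measurable_fst.fst measurable_snd measurable_const).sub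
                  measurable_const)))
          exact bdd_integrable (C := 1)
            hm.stronglyMeasurable.integral_prod_right'.aestronglyMeasurable
            (fun z => abs_integral_le_one (fun v' => abs_mul_le_one
              (abs_mul_le_one (hcabs z.2) (hψabs z.1 z.2 l))
              (abs_mul_le_one (hcabs v') (hψabs z.1 v' l))))
        rw [integral_integral_swap hsw1]
        have e2 : ∀ v, (∫ u, ∫ v', (c v * (φ u v l - η)) * (c v' * (φ u v' l - η)) ∂μ ∂μ)
            = ∫ v', (c v * c v') * (∫ u, (φ u v l - η) * (φ u v' l - η) ∂μ) ∂μ := by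
          intro v
          have hsw2 : Integrable (Function.uncurry fun u v' =>
              (c v * (φ u v l - η)) * (c v' * (φ u v' l - η))) (μ.prod μ) := by
            have hm : Measurable fun w : ℝ × ℝ =>
                (c v * (φ w.1 v l - η)) * (c w.2 * (φ w.1 w.2 l - η)) :=
              ((measurable_const.mul
                ((meas_comp3 hmeas measurable_fst measurable_const measurable_const).sub
                  measurable_const)).mul
                ((hcm.comp measurable_snd).mul
                  ((meas_comp3 hmeas measurable_fst measurable_snd measurable_const).sub
                    measurable_const)))
            exact bdd_integrable (C := 1) hm.aestronglyMeasurable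
              (fun w => abs_mul_le_one
                (abs_mul_le_one (hcabs v) (hψabs w.1 v l))
                (abs_mul_le_one (hcabs w.2) (hψabs w.1 w.2 l)))
          rw [integral_integral_swap hsw2]
          congr 1; funext v'
          rw [← integral_const_mul]
          congr 1; funext u
          ring
        simp only [e2]
        have hvan : ∀ᵐ v ∂μ, (∫ v', (c v * c v') *
            (∫ u, (φ u v l - η) * (φ u v' l - η) ∂μ) ∂μ) = 0 := by
          filter_upwards [hK] with v hv
          have : ∫ v', (c v * c v') * (∫ u, (φ u v l - η) * (φ u v' l - η) ∂μ) ∂μ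
              = ∫ v', (0:ℝ) ∂μ := by
            apply integral_congr_ae
            filter_upwards [hv] with v' hv'
            rw [hv', mul_zero]
          rw [this, integral_zero]
        rw [integral_congr_ae hvan, integral_zero]
      have := ae_zero_of_integral_zero (C := 1)
        (hTm.mul hTm).aestronglyMeasurable
        (fun u => mul_self_nonneg _)
        (fun u => abs_mul_le_one (hTabs u) (hTabs u)) hzero
      filter_upwards [this] with u hu
      exact mul_self_eq_zero.mp hu
    have hTall : ∀ᵐ u ∂μ, ∀ q : ℚ,
        (∫ v, (Iic (q:ℝ)).indicator (fun _ => (1:ℝ)) v * (φ u v l - η) ∂μ) = 0 :=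
      (ae_all_iff).mpr hT
    filter_upwards [hTall] with u hu
    have hfm : AEStronglyMeasurable (fun v => φ u v l - η) μ :=
      ((meas_comp3 hmeas measurable_const measurable_id measurable_const).sub
        measurable_const).aestronglyMeasurable
    have hzero := ae_zero_of_setIntegral_Iic_rat hfm (fun v => hψabs u v l) ?_
    · filter_upwards [hzero] with v hv
      linarith
    · intro q
      rw [← integral_indicator measurableSet_Iic]
      rw [← hu q]
      congr 1; funext v
      by_cases hmem : v ∈ Iic (q:ℝ) <;> simp [hmem]
  -- FINAL ASSEMBLY
  have hmeq : (volume : Measure (ℝ × ℝ × ℝ)).restrict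
      (Set.Icc (0:ℝ) 1 ×ˢ Set.Icc (0:ℝ) 1 ×ˢ Set.Icc (0:ℝ) 1) = μ.prod (μ.prod μ) := by
    rw [Measure.volume_eq_prod, ← Measure.prod_restrict, Measure.volume_eq_prod,
      ← Measure.prod_restrict]
  rw [hmeq]
  have hFm : Measurable fun p : ℝ × ℝ × ℝ =>
      (φ p.1 p.2.1 p.2.2 - η) * (φ p.1 p.2.1 p.2.2 - η) :=
    (hmeas.sub measurable_const).mul (hmeas.sub measurable_const)
  have hFint : Integrable (fun p : ℝ × ℝ × ℝ =>
      (φ p.1 p.2.1 p.2.2 - η) * (φ p.1 p.2.1 p.2.2 - η)) (μ.prod (μ.prod μ)) :=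
    bdd_integrable (C := 1) hFm.aestronglyMeasurable
      (fun p => abs_mul_le_one (hψabs _ _ _) (hψabs _ _ _))
  have htot : ∫ p : ℝ × ℝ × ℝ, (φ p.1 p.2.1 p.2.2 - η) * (φ p.1 p.2.1 p.2.2 - η)
      ∂(μ.prod (μ.prod μ)) = 0 := by
    rw [integral_prod_symm _ hFint]
    have hGint2 : Integrable (fun y : ℝ × ℝ =>
        ∫ u, (φ u y.1 y.2 - η) * (φ u y.1 y.2 - η) ∂μ) (μ.prod μ) := by
      have hm : Measurable fun w : (ℝ × ℝ) × ℝ =>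
          (φ w.2 w.1.1 w.1.2 - η) * (φ w.2 w.1.1 w.1.2 - η) :=
        ((meas_comp3 hmeas measurable_snd measurable_fst.fst measurable_fst.snd).sub
          measurable_const).mul
          ((meas_comp3 hmeas measurable_snd measurable_fst.fst measurable_fst.snd).sub
            measurable_const)
      exact bdd_integrable (C := 1)
        hm.stronglyMeasurable.integral_prod_right'.aestronglyMeasurable
        (fun y => abs_integral_le_one
          (fun u => abs_mul_le_one (hψabs u y.1 y.2) (hψabs u y.1 y.2)))
    rw [integral_prod_symm _ hGint2]
    have key : ∀ᵐ l ∂μ, (∫ v, ∫ u, (φ u v l - η) * (φ u v l - η) ∂μ ∂μ) = 0 := by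
      filter_upwards [hC] with l hl
      have hsw : Integrable (Function.uncurry fun v u =>
          (φ u v l - η) * (φ u v l - η)) (μ.prod μ) := by
        have hm : Measurable fun w : ℝ × ℝ => (φ w.2 w.1 l - η) * (φ w.2 w.1 l - η) :=
          ((meas_comp3 hmeas measurable_snd measurable_fst measurable_const).sub
            measurable_const).mul
            ((meas_comp3 hmeas measurable_snd measurable_fst measurable_const).sub
              measurable_const)
        exact bdd_integrable (C := 1) hm.aestronglyMeasurable
          (fun w => abs_mul_le_one (hψabs w.2 w.1 l) (hψabs w.2 w.1 l))
      rw [integral_integral_swap hsw]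
      have : ∀ᵐ u ∂μ, (∫ v, (φ u v l - η) * (φ u v l - η) ∂μ) = 0 := by
        filter_upwards [hl] with u hu
        have : ∫ v, (φ u v l - η) * (φ u v l - η) ∂μ = ∫ v, (0:ℝ) ∂μ := by
          apply integral_congr_ae
          filter_upwards [hu] with v hv
          rw [hv, sub_self, mul_zero]
        rw [this, integral_zero]
      rw [integral_congr_ae this, integral_zero]
    rw [integral_congr_ae key, integral_zero]
  have := ae_zero_of_integral_zero (C := 1) hFm.aestronglyMeasurable
    (fun p => mul_self_nonneg _)
    (fun p => abs_mul_le_one (hψabs _ _ _) (hψabs _ _ _)) htot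
  filter_upwards [this] with p hp
  have := mul_self_eq_zero.mp hp
  linarith
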